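/- For every compact metric space S, every k ∈ ℕ, and all continuous f_1, …, f_k : S → ℝ there exists a constant C ∈ (0,∞), depending only on f_1, …, f_k, such that for every finite set E with #E ≥ 2, every irreducible stochastic kernel q on E with zero trace and stationary π, and every ξ ∈ S^E, with φ(λ) = Π_{i=1}^k ⟨f_i,λ⟩: |L_VM(φ∘m)(ξ)| ≤ C Σ_{x,y∈E} π(x)² q(x,y) 1_{{ξ(x) ≠ ξ(y)}}. -/

import Mathlib

open MeasureTheory Finset
open scoped Classical

universe u

/-- Empirical measure `m(ξ) = ∑_{x∈E} π(x) δ_{ξ(x)}`. -/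
noncomputable def empMeas {E S : Type*} [Fintype E] [MeasurableSpace S]
    (π : E → ℝ) (ξ : E → S) : Measure S :=
  ∑ x : E, (ENNReal.ofReal (π x)) • Measure.dirac (ξ x)

/-- Voting generator `L_VM F(ξ) = ∑_{x,y} q(x,y)[F(ξ^{x,y}) − F(ξ)]`. -/
noncomputable def LVM {E S : Type*} [Fintype E] [DecidableEq E]
    (q : E → E → ℝ) (F : (E → S) → ℝ) (ξ : E → S) : ℝ :=
  ∑ x : E, ∑ y : E, q x y * (F (Function.update ξ x (ξ y)) - F ξ)

lemma aux_abs_prod_le {ι : Type*} (s : Finset ι) (b M : ι → ℝ)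
    (h : ∀ i ∈ s, |b i| ≤ M i) : |∏ i ∈ s, b i| ≤ ∏ i ∈ s, M i := by
  rw [Finset.abs_prod]
  exact Finset.prod_le_prod (fun i _ => abs_nonneg _) h

lemma aux_L1 {ι : Type*} [DecidableEq ι] (s : Finset ι) (a e M N : ι → ℝ) (t : ℝ)
    (ht0 : 0 ≤ t) (ht1 : t ≤ 1)
    (ha : ∀ i ∈ s, |a i| ≤ M i) (he : ∀ i ∈ s, |e i| ≤ N i) :
    |∏ i ∈ s, (a i + t * e i) - ∏ i ∈ s, a i| ≤ t * ∏ i ∈ s, (M i + N i) := by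
  induction s using Finset.cons_induction with
  | empty => simp [ht0]
  | cons x s' hx ih =>
    have hax : |a x| ≤ M x := ha x (Finset.mem_cons_self _ _)
    have hex : |e x| ≤ N x := he x (Finset.mem_cons_self _ _)
    have ha' : ∀ i ∈ s', |a i| ≤ M i := fun i hi => ha i (Finset.mem_cons_of_mem hi)
    have he' : ∀ i ∈ s', |e i| ≤ N i := fun i hi => he i (Finset.mem_cons_of_mem hi)
    have ih' := ih ha' he'
    set P := ∏ i ∈ s', (a i + t * e i) with hP
    set A := ∏ i ∈ s', a i with hA
    have hQnn : (0:ℝ) ≤ ∏ i ∈ s', (M i + N i) :=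
      Finset.prod_nonneg fun i hi => by
        have := abs_nonneg (a i); nlinarith [ha' i hi, he' i hi, abs_nonneg (e i)]
    have hPb : |P| ≤ ∏ i ∈ s', (M i + N i) := by
      apply aux_abs_prod_le
      intro i hi
      calc |a i + t * e i| ≤ |a i| + |t * e i| := abs_add_le _ _
        _ ≤ M i + N i := by
          rw [abs_mul, abs_of_nonneg ht0]
          have h1 := ha' i hi; have h2 := he' i hi
          have := abs_nonneg (e i)
          nlinarith
    rw [Finset.prod_cons, Finset.prod_cons]
    have key : (a x + t * e x) * P - a x * A = a x * (P - A) + t * (e x * P) := by ring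
    rw [key]
    calc |a x * (P - A) + t * (e x * P)| ≤ |a x * (P - A)| + |t * (e x * P)| := abs_add_le _ _
      _ = |a x| * |P - A| + t * (|e x| * |P|) := by
          rw [abs_mul, abs_mul, abs_mul, abs_of_nonneg ht0]
      _ ≤ M x * (t * ∏ i ∈ s', (M i + N i)) + t * (N x * (∏ i ∈ s', (M i + N i))) := by
          have h1 : |a x| * |P - A| ≤ M x * (t * ∏ i ∈ s', (M i + N i)) := by
            apply mul_le_mul hax ih' (abs_nonneg _) (le_trans (abs_nonneg _) hax)
          have h2 : |e x| * |P| ≤ N x * (∏ i ∈ s', (M i + N i)) :=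
            mul_le_mul hex hPb (abs_nonneg _) (le_trans (abs_nonneg _) hex)
          nlinarith
      _ = t * ((M x + N x) * ∏ i ∈ s', (M i + N i)) := by ring
      _ = t * ∏ i ∈ Finset.cons x s' hx, (M i + N i) := by rw [Finset.prod_cons]

lemma aux_L2 {ι : Type*} [DecidableEq ι] (s : Finset ι) (a e M N : ι → ℝ) (t : ℝ)
    (ht0 : 0 ≤ t) (ht1 : t ≤ 1)
    (ha : ∀ i ∈ s, |a i| ≤ M i) (he : ∀ i ∈ s, |e i| ≤ N i) :
    |∏ i ∈ s, (a i + t * e i) - ∏ i ∈ s, a i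
      - t * ∑ i ∈ s, e i * ∏ j ∈ s.erase i, a j|
      ≤ t ^ 2 * ∏ i ∈ s, (M i + N i) := by
  induction s using Finset.cons_induction with
  | empty => simp [pow_two, mul_nonneg ht0 ht0]
  | cons x s' hx ih =>
    have hax : |a x| ≤ M x := ha x (Finset.mem_cons_self _ _)
    have hex : |e x| ≤ N x := he x (Finset.mem_cons_self _ _)
    have ha' : ∀ i ∈ s', |a i| ≤ M i := fun i hi => ha i (Finset.mem_cons_of_mem hi)
    have he' : ∀ i ∈ s', |e i| ≤ N i := fun i hi => he i (Finset.mem_cons_of_mem hi)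
    have ih' := ih ha' he'
    have hL1 := aux_L1 s' a e M N t ht0 ht1 ha' he'
    set P := ∏ i ∈ s', (a i + t * e i) with hP
    set A := ∏ i ∈ s', a i with hA
    set L := ∑ i ∈ s', e i * ∏ j ∈ s'.erase i, a j with hL
    have hsum : ∑ i ∈ Finset.cons x s' hx, e i * ∏ j ∈ (Finset.cons x s' hx).erase i, a j
        = e x * A + a x * L := by
      rw [Finset.sum_cons, Finset.erase_cons]
      congr 1
      rw [hL, Finset.mul_sum]
      refine Finset.sum_congr rfl fun i hi => ?_
      have hne : x ≠ i := fun h => hx (h ▸ hi)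
      rw [Finset.erase_cons_of_ne hx hne, Finset.prod_cons]
      ring
    rw [Finset.prod_cons, Finset.prod_cons, hsum]
    have key : (a x + t * e x) * P - a x * A - t * (e x * A + a x * L)
        = a x * (P - A - t * L) + t * (e x * (P - A)) := by ring
    rw [key]
    have hQnn : (0:ℝ) ≤ ∏ i ∈ s', (M i + N i) :=
      Finset.prod_nonneg fun i hi => by
        nlinarith [ha' i hi, he' i hi, abs_nonneg (e i), abs_nonneg (a i)]
    calc |a x * (P - A - t * L) + t * (e x * (P - A))|
        ≤ |a x * (P - A - t * L)| + |t * (e x * (P - A))| := abs_add_le _ _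
      _ = |a x| * |P - A - t * L| + t * (|e x| * |P - A|) := by
          rw [abs_mul, abs_mul, abs_mul, abs_of_nonneg ht0]
      _ ≤ M x * (t ^ 2 * ∏ i ∈ s', (M i + N i))
          + t * (N x * (t * ∏ i ∈ s', (M i + N i))) := by
          have h1 : |a x| * |P - A - t * L| ≤ M x * (t ^ 2 * ∏ i ∈ s', (M i + N i)) :=
            mul_le_mul hax ih' (abs_nonneg _) (le_trans (abs_nonneg _) hax)
          have h2 : |e x| * |P - A| ≤ N x * (t * ∏ i ∈ s', (M i + N i)) :=
            mul_le_mul hex hL1 (abs_nonneg _) (le_trans (abs_nonneg _) hex)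
          nlinarith
      _ ≤ t ^ 2 * ((M x + N x) * ∏ i ∈ s', (M i + N i)) := by nlinarith
      _ = t ^ 2 * ∏ i ∈ Finset.cons x s' hx, (M i + N i) := by rw [Finset.prod_cons]

lemma integral_empMeas {E : Type u} {S : Type*} [Fintype E]
    [MetricSpace S] [MeasurableSpace S] [BorelSpace S]
    (π : E → ℝ) (hπ : ∀ x, 0 ≤ π x) (ξ : E → S) (g : C(S, ℝ)) :
    ∫ σ, g σ ∂(empMeas π ξ) = ∑ x : E, π x * g (ξ x) := by
  have hint : ∀ x : E, Integrable (⇑g) ((ENNReal.ofReal (π x)) • Measure.dirac (ξ x)) := by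
    intro x
    refine Integrable.smul_measure ?_ ENNReal.ofReal_ne_top
    refine ⟨g.continuous.aestronglyMeasurable, ?_⟩
    simp [HasFiniteIntegral, lintegral_dirac]
  rw [empMeas, integral_finset_sum_measure (fun x _ => hint x)]
  refine Finset.sum_congr rfl fun x _ => ?_
  rw [integral_smul_measure, integral_dirac, ENNReal.toReal_ofReal (hπ x)]
  simp [smul_eq_mul]

/-- Equation (3.22): for `φ(λ) = ∏_{i=1}^k ⟨f_i, λ⟩` there is a constant `C = C_φ` depending
only on `f₁, …, f_k` such that for every finite voter-model setting,
`|L_VM(φ∘m)(ξ)| ≤ C ∑_{x,y} π(x)² q(x,y) 1{ξ(x) ≠ ξ(y)}`. -/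
theorem voter_generator_indicator_bound
    {S : Type*} [MetricSpace S] [CompactSpace S] [MeasurableSpace S] [BorelSpace S]
    (k : ℕ) (f : Fin k → C(S, ℝ)) :
    ∃ C : ℝ, 0 < C ∧
      ∀ (E : Type u) [Fintype E] [DecidableEq E],
        2 ≤ Fintype.card E →
        ∀ (q : E → E → ℝ) (π : E → ℝ),
          (∀ x y, 0 ≤ q x y) → (∀ x, ∑ y, q x y = 1) → (∀ x, q x x = 0) →
          (∀ x y : E, ∃ n : ℕ, 0 < ((Matrix.of q) ^ n) x y) →
          (∀ x, 0 < π x) → (∑ x, π x = 1) →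
          (∀ y, ∑ x, π x * q x y = π y) →
          ∀ ξ : E → S,
            |LVM q (fun ζ => ∏ i : Fin k, ∫ σ, f i σ ∂(empMeas π ζ)) ξ| ≤
              C * ∑ x : E, ∑ y : E,
                π x ^ 2 * q x y * (if ξ x = ξ y then 0 else 1) := by
  set M : Fin k → ℝ := fun i => ‖f i‖ + 1 with hM_def
  set N : Fin k → ℝ := fun i => 2 * (‖f i‖ + 1) with hN_def
  refine ⟨∏ i : Fin k, (M i + N i), ?_, ?_⟩
  · exact Finset.prod_pos fun i _ => by
      have := norm_nonneg (f i); simp only [hM_def, hN_def]; nlinarith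
  intro E _ _ hcard q π hq hrow hdiag hirr hπ hπsum hstat ξ
  set C : ℝ := ∏ i : Fin k, (M i + N i) with hC_def
  have hπle : ∀ x : E, 0 ≤ π x := fun x => (hπ x).le
  have hπ1 : ∀ x : E, π x ≤ 1 := by
    intro x
    have h := Finset.single_le_sum (f := π) (fun z _ => hπle z) (Finset.mem_univ x)
    rw [hπsum] at h; exact h
  set a : Fin k → ℝ := fun i => ∑ z : E, π z * (f i) (ξ z) with ha_def
  have ha : ∀ i, |a i| ≤ M i := by
    intro i
    calc |a i| ≤ ∑ z : E, |π z * (f i) (ξ z)| := Finset.abs_sum_le_sum_abs _ _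
      _ ≤ ∑ z : E, π z * ‖f i‖ := by
          refine Finset.sum_le_sum fun z _ => ?_
          rw [abs_mul, abs_of_nonneg (hπle z)]
          refine mul_le_mul_of_nonneg_left ?_ (hπle z)
          have := (f i).norm_coe_le_norm (ξ z)
          rwa [Real.norm_eq_abs] at this
      _ = ‖f i‖ := by rw [← Finset.sum_mul, hπsum, one_mul]
      _ ≤ M i := by simp only [hM_def]; linarith
  have he : ∀ (x y : E) (i : Fin k), |(f i) (ξ y) - (f i) (ξ x)| ≤ N i := by
    intro x y i
    have h1 := (f i).norm_coe_le_norm (ξ y)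
    have h2 := (f i).norm_coe_le_norm (ξ x)
    rw [Real.norm_eq_abs] at h1 h2
    simp only [hN_def]
    calc |(f i) (ξ y) - (f i) (ξ x)| ≤ |(f i) (ξ y)| + |(f i) (ξ x)| := abs_sub _ _
      _ ≤ 2 * (‖f i‖ + 1) := by linarith
  -- integrals as finite sums
  have hbase : ∏ i : Fin k, ∫ σ, f i σ ∂(empMeas π ξ) = ∏ i : Fin k, a i :=
    Finset.prod_congr rfl fun i _ => integral_empMeas π hπle ξ (f i)
  have hupd : ∀ x y : E,
      ∏ i : Fin k, ∫ σ, f i σ ∂(empMeas π (Function.update ξ x (ξ y)))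
      = ∏ i : Fin k, (a i + π x * ((f i) (ξ y) - (f i) (ξ x))) := by
    intro x y
    refine Finset.prod_congr rfl fun i _ => ?_
    rw [integral_empMeas π hπle _ (f i)]
    have hz : ∀ z : E, π z * (f i) (Function.update ξ x (ξ y) z)
        = π z * (f i) (ξ z) + (if z = x then π x * ((f i) (ξ y) - (f i) (ξ x)) else 0) := by
      intro z
      by_cases hzx : z = x
      · subst hzx; rw [Function.update_self, if_pos rfl]; ring
      · rw [Function.update_of_ne hzx, if_neg hzx]; ring
    rw [Finset.sum_congr rfl fun z _ => hz z, Finset.sum_add_distrib]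
    simp [ha_def]
  -- the linear term vanishes
  have key : ∀ g : E → ℝ, ∑ x : E, ∑ y : E, π x * q x y * (g y - g x) = 0 := by
    intro g
    have h1 : ∑ x : E, ∑ y : E, π x * q x y * g y = ∑ y : E, π y * g y := by
      rw [Finset.sum_comm]
      refine Finset.sum_congr rfl fun y _ => ?_
      rw [← hstat y, Finset.sum_mul]
    have h2 : ∑ x : E, ∑ y : E, π x * q x y * g x = ∑ x : E, π x * g x := by
      refine Finset.sum_congr rfl fun x _ => ?_
      calc ∑ y : E, π x * q x y * g x = (π x * g x) * ∑ y : E, q x y := by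
            rw [Finset.mul_sum]; exact Finset.sum_congr rfl fun y _ => by ring
        _ = π x * g x := by rw [hrow x, mul_one]
    calc ∑ x : E, ∑ y : E, π x * q x y * (g y - g x)
        = ∑ x : E, ((∑ y : E, π x * q x y * g y) - ∑ y : E, π x * q x y * g x) := by
          refine Finset.sum_congr rfl fun x _ => ?_
          rw [← Finset.sum_sub_distrib]
          exact Finset.sum_congr rfl fun y _ => by ring
      _ = (∑ x : E, ∑ y : E, π x * q x y * g y) - ∑ x : E, ∑ y : E, π x * q x y * g x :=
          Finset.sum_sub_distrib _ _
      _ = 0 := by rw [h1, h2, sub_self]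
  set B : Fin k → ℝ := fun i => ∏ j ∈ Finset.univ.erase i, a j with hB_def
  set Lin : E → E → ℝ := fun x y =>
    π x * ∑ i : Fin k, ((f i) (ξ y) - (f i) (ξ x)) * B i with hLin_def
  set R : E → E → ℝ := fun x y =>
    (∏ i : Fin k, (a i + π x * ((f i) (ξ y) - (f i) (ξ x)))) - (∏ i : Fin k, a i) - Lin x y
    with hR_def
  have hLVM : LVM q (fun ζ => ∏ i : Fin k, ∫ σ, f i σ ∂(empMeas π ζ)) ξ
      = (∑ x : E, ∑ y : E, q x y * Lin x y) + ∑ x : E, ∑ y : E, q x y * R x y := by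
    rw [LVM, ← Finset.sum_add_distrib]
    refine Finset.sum_congr rfl fun x _ => ?_
    rw [← Finset.sum_add_distrib]
    refine Finset.sum_congr rfl fun y _ => ?_
    simp only [hupd x y, hbase, hR_def]
    ring
  have hLin0 : ∑ x : E, ∑ y : E, q x y * Lin x y = 0 := by
    have hstep : ∀ x y : E, q x y * Lin x y
        = ∑ i : Fin k, π x * q x y * ((f i) (ξ y) - (f i) (ξ x)) * B i := by
      intro x y
      simp only [hLin_def]
      rw [Finset.mul_sum, Finset.mul_sum]
      exact Finset.sum_congr rfl fun i _ => by ring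
    calc ∑ x : E, ∑ y : E, q x y * Lin x y
        = ∑ x : E, ∑ i : Fin k, ∑ y : E, π x * q x y * ((f i) (ξ y) - (f i) (ξ x)) * B i := by
          refine Finset.sum_congr rfl fun x _ => ?_
          rw [← Finset.sum_comm]
          exact Finset.sum_congr rfl fun y _ => hstep x y
      _ = ∑ i : Fin k, ∑ x : E, ∑ y : E, π x * q x y * ((f i) (ξ y) - (f i) (ξ x)) * B i :=
          Finset.sum_comm
      _ = ∑ i : Fin k, (∑ x : E, ∑ y : E, π x * q x y * ((f i) (ξ y) - (f i) (ξ x))) * B i := by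
          refine Finset.sum_congr rfl fun i _ => ?_
          rw [Finset.sum_mul]
          refine Finset.sum_congr rfl fun x _ => ?_
          rw [Finset.sum_mul]
      _ = 0 := by
          refine Finset.sum_eq_zero fun i _ => ?_
          rw [key (fun z => (f i) (ξ z)), zero_mul]
  have hR : ∀ x y : E, |R x y| ≤ π x ^ 2 * C * (if ξ x = ξ y then 0 else 1) := by
    intro x y
    by_cases hxy : ξ x = ξ y
    · simp only [hR_def, hLin_def, hxy, if_pos]
      simp
    · rw [if_neg hxy, mul_one]
      have := aux_L2 (Finset.univ : Finset (Fin k)) a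
        (fun i => (f i) (ξ y) - (f i) (ξ x)) M N (π x) (hπle x) (hπ1 x)
        (fun i _ => ha i) (fun i _ => he x y i)
      simp only [hR_def, hLin_def, hB_def]
      calc |(∏ i : Fin k, (a i + π x * ((f i) (ξ y) - (f i) (ξ x)))) - (∏ i : Fin k, a i)
            - π x * ∑ i : Fin k, ((f i) (ξ y) - (f i) (ξ x)) * ∏ j ∈ Finset.univ.erase i, a j|
          ≤ π x ^ 2 * ∏ i : Fin k, (M i + N i) := this
        _ = π x ^ 2 * C := by rw [hC_def]
  have hfinal : |∑ x : E, ∑ y : E, q x y * R x y|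
      ≤ C * ∑ x : E, ∑ y : E, π x ^ 2 * q x y * (if ξ x = ξ y then 0 else 1) := by
    calc |∑ x : E, ∑ y : E, q x y * R x y|
        ≤ ∑ x : E, |∑ y : E, q x y * R x y| := Finset.abs_sum_le_sum_abs _ _
      _ ≤ ∑ x : E, ∑ y : E, |q x y * R x y| :=
          Finset.sum_le_sum fun x _ => Finset.abs_sum_le_sum_abs _ _
      _ ≤ ∑ x : E, ∑ y : E, q x y * (π x ^ 2 * C * (if ξ x = ξ y then 0 else 1)) := by
          refine Finset.sum_le_sum fun x _ => Finset.sum_le_sum fun y _ => ?_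
          rw [abs_mul, abs_of_nonneg (hq x y)]
          exact mul_le_mul_of_nonneg_left (hR x y) (hq x y)
      _ = C * ∑ x : E, ∑ y : E, π x ^ 2 * q x y * (if ξ x = ξ y then 0 else 1) := by
          rw [Finset.mul_sum]
          refine Finset.sum_congr rfl fun x _ => ?_
          rw [Finset.mul_sum]
          exact Finset.sum_congr rfl fun y _ => by ring
  rw [hLVM, hLin0, zero_add]
  exact hfinal
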